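/- Every finite p-solvable group G whose order is divisible by p contains a non-Schur p-element. -/

import Mathlib

/-- A non-Schur element of a group `G` is an element `x` with
`x ∉ [C_G(x), C_G(x)]`. -/
def IsNonSchur {G : Type*} [Group G] (x : G) : Prop :=
  x ∉ ⁅Subgroup.centralizer {x}, Subgroup.centralizer {x}⁆

/-- A `p`-element is an element of `p`-power order. -/
def IsPElement (p : ℕ) {G : Type*} [Group G] (x : G) : Prop :=
  ∃ n : ℕ, orderOf x = p ^ n

/-- A finite group is p-solvable if it has a normal series in which every quotient
is either a p-group (p-power order) or has order coprime to p. -/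
def IsPSolvable (p : ℕ) (G : Type*) [Group G] : Prop :=
  ∃ (n : ℕ) (H : Fin (n + 1) → Subgroup G),
    H 0 = ⊥ ∧ H (Fin.last n) = ⊤ ∧
    ∀ i : Fin n, H i.castSucc ≤ H i.succ ∧
      ((H i.castSucc).subgroupOf (H i.succ)).Normal ∧
      ((∃ k : ℕ, (H i.castSucc).relIndex ↑(H i.succ) = p ^ k) ∨
        Nat.Coprime ((H i.castSucc).relIndex ↑(H i.succ)) p)

namespace NonSchurAux

open Subgroup

variable {G : Type*} [Group G]

/-- The image of the centralizer is contained in the centralizer of the image. -/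
lemma map_centralizer_le {H : Type*} [Group H] (f : G →* H) (x : G) :
    (Subgroup.centralizer {x}).map f ≤ Subgroup.centralizer {f x} := by
  rintro y ⟨c, hc, rfl⟩
  rw [Subgroup.mem_centralizer_iff]
  rintro h hh
  rw [Set.mem_singleton_iff] at hh
  subst hh
  have := Subgroup.mem_centralizer_iff.mp hc x rfl
  rw [← map_mul, this, map_mul]

/-- non-Schur-ness lifts along arbitrary homomorphisms. -/
lemma nonSchur_lift {H : Type*} [Group H] (f : G →* H) (x : G)
    (h : f x ∉ ⁅Subgroup.centralizer {f x}, Subgroup.centralizer {f x}⁆) :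
    x ∉ ⁅Subgroup.centralizer {x}, Subgroup.centralizer {x}⁆ := by
  intro hx
  apply h
  have h2 : f x ∈ (⁅Subgroup.centralizer {x}, Subgroup.centralizer {x}⁆).map f :=
    ⟨x, hx, rfl⟩
  rw [Subgroup.map_commutator] at h2
  exact Subgroup.commutator_mono (map_centralizer_le f x) (map_centralizer_le f x) h2

/-- p-elements lift along surjections of finite groups. -/
lemma exists_pElement_lift {H : Type*} [Group H] [Finite G] {f : G →* H}
    (hf : Function.Surjective f) {p : ℕ} (hp : p.Prime) (y : H) (hy : IsPElement p y) :
    ∃ x : G, f x = y ∧ IsPElement p x := by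
  obtain ⟨g, rfl⟩ := hf y
  obtain ⟨a, ha⟩ := hy
  set o := orderOf g with ho
  have ho0 : o ≠ 0 := (orderOf_pos g).ne'
  set b := o.factorization p with hb
  set s := o / p ^ b with hs
  have hps : ¬ p ∣ s := Nat.not_dvd_ordCompl hp ho0
  have hos : p ^ b * s = o := Nat.ordProj_mul_ordCompl_eq_self o p
  have hcops : Nat.Coprime p s := (Nat.Prime.coprime_iff_not_dvd hp).mpr hps
  obtain ⟨t, ht⟩ : ∃ t, s * t ≡ 1 [MOD p ^ b] := by
    rcases Nat.lt_or_ge 1 (p ^ b) with h1 | h1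
    · obtain ⟨m, -, hm⟩ := Nat.exists_mul_mod_eq_one_of_coprime
        (Nat.Coprime.pow_right b hcops.symm) h1
      exact ⟨m, by unfold Nat.ModEq; rw [hm, Nat.mod_eq_of_lt h1]⟩
    · have : p ^ b = 1 := le_antisymm h1 (Nat.one_le_iff_ne_zero.mpr (pow_ne_zero b hp.pos.ne'))
      exact ⟨1, by rw [this]; exact Nat.modEq_one⟩
  refine ⟨g ^ (s * t), ?_, ?_⟩
  · rw [map_pow]
    have hdvd : orderOf (f g) ∣ p ^ b := by
      have h1 : orderOf (f g) ∣ p ^ b * s := by rw [hos]; exact orderOf_map_dvd f g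
      refine (Nat.Coprime.dvd_of_dvd_mul_right ?_ h1)
      rw [ha]; exact Nat.Coprime.pow_left a hcops
    have : (s * t) ≡ 1 [MOD orderOf (f g)] := Nat.ModEq.of_dvd hdvd ht
    calc f g ^ (s * t) = f g ^ 1 := pow_eq_pow_iff_modEq.mpr this
      _ = f g := pow_one _
  · have hpow : (g ^ (s * t)) ^ (p ^ b) = 1 := by
      rw [← pow_mul]
      have h2 : s * t * p ^ b = o * t := by rw [← hos]; ring
      rw [h2, pow_mul, pow_orderOf_eq_one, one_pow]
    obtain ⟨k, _, hk⟩ := (Nat.dvd_prime_pow hp).mp (orderOf_dvd_of_pow_eq_one hpow)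
    exact ⟨k, hk⟩

section Cards

variable [Finite G]

lemma card_subgroupOf (K A : Subgroup G) :
    Nat.card (K.subgroupOf A) = Nat.card ↥(K ⊓ A) := by
  have e1 := (K.subgroupOf A).equivMapOfInjective A.subtype A.subtype_injective
  rw [Subgroup.subgroupOf_map_subtype] at e1
  exact Nat.card_congr e1.toEquiv

lemma card_eq_relindex_mul (A B : Subgroup G) :
    Nat.card B = A.relIndex B * Nat.card ↥(A ⊓ B) := by
  have h := Subgroup.card_eq_card_quotient_mul_card_subgroup (A.subgroupOf B)
  have h2 : A.relIndex B = Nat.card (↥B ⧸ A.subgroupOf B) := Subgroup.index_eq_card _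
  rw [h2, h, card_subgroupOf]

lemma card_map_mul {H : Type*} [Group H] [Finite H] (f : G →* H) (A : Subgroup G) :
    Nat.card A = Nat.card (A.map f) * Nat.card ↥(f.ker ⊓ A) := by
  have h := Subgroup.card_eq_card_quotient_mul_card_subgroup ((f.comp A.subtype).ker)
  have hker : (f.comp A.subtype).ker = f.ker.subgroupOf A := by
    rw [← MonoidHom.comap_ker]; rfl
  have hrange : (f.comp A.subtype).range = A.map f := by
    rw [MonoidHom.range_comp, Subgroup.range_subtype]
  have e0 := QuotientGroup.quotientKerEquivRange (f.comp A.subtype)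
  rw [h, Nat.card_congr e0.toEquiv, hrange, hker, card_subgroupOf]

lemma relindex_map_dvd {H : Type*} [Group H] [Finite H] (f : G →* H) {A B : Subgroup G}
    (hAB : A ≤ B) : (A.map f).relIndex (B.map f) ∣ A.relIndex B := by
  set R := A.relIndex B with hR
  set R' := (A.map f).relIndex (B.map f) with hR'
  have h1 : Nat.card B = R * Nat.card A := by
    have := card_eq_relindex_mul A B
    rwa [inf_eq_left.mpr hAB] at this
  have h2 : Nat.card (B.map f) = R' * Nat.card (A.map f) := by
    have := card_eq_relindex_mul (A.map f) (B.map f)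
    rwa [inf_eq_left.mpr (Subgroup.map_mono hAB)] at this
  have h3 := card_map_mul f A
  have h4 := card_map_mul f B
  obtain ⟨t, ht⟩ : Nat.card ↥(f.ker ⊓ A) ∣ Nat.card ↥(f.ker ⊓ B) :=
    Subgroup.card_dvd_of_le (inf_le_inf_left _ hAB)
  refine ⟨t, ?_⟩
  have hpos : 0 < Nat.card (A.map f) * Nat.card ↥(f.ker ⊓ A) :=
    Nat.mul_pos Nat.card_pos Nat.card_pos
  refine Nat.eq_of_mul_eq_mul_left hpos ?_
  calc (Nat.card (A.map f) * Nat.card ↥(f.ker ⊓ A)) * R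
      = R * Nat.card A := by rw [h3]; ring
    _ = Nat.card B := h1.symm
    _ = Nat.card (B.map f) * Nat.card ↥(f.ker ⊓ B) := h4
    _ = (R' * Nat.card (A.map f)) * (Nat.card ↥(f.ker ⊓ A) * t) := by rw [← h2, ← ht]
    _ = (Nat.card (A.map f) * Nat.card ↥(f.ker ⊓ A)) * (R' * t) := by ring

end Cards

/-- Conversion of `subgroupOf`-normality to an elementwise statement. -/
lemma subgroupOf_normal_iff {A B : Subgroup G} (hAB : A ≤ B) :
    (A.subgroupOf B).Normal ↔ ∀ b ∈ B, ∀ a ∈ A, b * a * b⁻¹ ∈ A := by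
  constructor
  · intro hN b hb a ha
    have := hN.conj_mem ⟨a, hAB ha⟩ (by rwa [Subgroup.mem_subgroupOf]) ⟨b, hb⟩
    rwa [Subgroup.mem_subgroupOf] at this
  · intro h
    constructor
    rintro ⟨a, haB⟩ ha ⟨b, hb⟩
    rw [Subgroup.mem_subgroupOf] at ha ⊢
    exact h b hb a ha

/-- p-solvability passes to quotients. -/
lemma isPSolvable_quotient [Finite G] {p : ℕ} (hp : p.Prime) (h : IsPSolvable p G)
    (N : Subgroup G) [N.Normal] : IsPSolvable p (G ⧸ N) := by
  obtain ⟨n, H, h0, hl, hstep⟩ := h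
  refine ⟨n, fun i => (H i).map (QuotientGroup.mk' N), ?_, ?_, ?_⟩
  · show (H 0).map (QuotientGroup.mk' N) = ⊥
    rw [h0]; exact Subgroup.map_bot _
  · show (H (Fin.last n)).map (QuotientGroup.mk' N) = ⊤
    rw [hl, ← MonoidHom.range_eq_map]
    exact MonoidHom.range_eq_top.mpr (QuotientGroup.mk'_surjective N)
  · intro i
    obtain ⟨hle, hnorm, hrel⟩ := hstep i
    have hle' := Subgroup.map_mono (f := QuotientGroup.mk' N) hle
    refine ⟨hle', ?_, ?_⟩
    · rw [subgroupOf_normal_iff hle']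
      rintro b ⟨b₀, hb₀, rfl⟩ a ⟨a₀, ha₀, rfl⟩
      refine ⟨b₀ * a₀ * b₀⁻¹, (subgroupOf_normal_iff hle).mp hnorm b₀ hb₀ a₀ ha₀, by
        simp [map_mul]⟩
    · have hdvd := relindex_map_dvd (QuotientGroup.mk' N) hle
      rcases hrel with ⟨k, hk⟩ | hcop
      · left
        rw [hk] at hdvd
        obtain ⟨j, _, hj⟩ := (Nat.dvd_prime_pow hp).mp hdvd
        exact ⟨j, hj⟩
      · right; exact Nat.Coprime.coprime_dvd_left hdvd hcop

section Core

/-- Conjugate of a subgroup. -/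
def conjSG (g : G) (N : Subgroup G) : Subgroup G := N.map (MulAut.conj g).toMonoidHom

lemma mem_conjSG {g x : G} {N : Subgroup G} : x ∈ conjSG g N ↔ ∃ n ∈ N, g * n * g⁻¹ = x := by
  simp [conjSG, Subgroup.mem_map, MulAut.conj_apply]

lemma conjSG_mono {g : G} {N M : Subgroup G} (h : N ≤ M) : conjSG g N ≤ conjSG g M :=
  Subgroup.map_mono h

lemma conjSG_conjSG {a b : G} {N : Subgroup G} : conjSG a (conjSG b N) = conjSG (a * b) N := by
  unfold conjSG
  rw [Subgroup.map_map]
  congr 1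
  ext x
  simp [MulAut.conj_apply]

lemma conjSG_one {N : Subgroup G} : conjSG (1 : G) N = N := by
  ext x; simp [mem_conjSG]

lemma card_conjSG {g : G} {N : Subgroup G} : Nat.card (conjSG g N) = Nat.card N :=
  (Nat.card_congr (N.equivMapOfInjective _ (MulAut.conj g).injective).toEquiv).symm

lemma conjSG_sup {g : G} {N M : Subgroup G} :
    conjSG g (N ⊔ M) = conjSG g N ⊔ conjSG g M := Subgroup.map_sup _ _ _

lemma conjSG_eq_of_forall {K N : Subgroup G} (hinv : ∀ g ∈ K, conjSG g N ≤ N) {g : G}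
    (hg : g ∈ K) : conjSG g N = N := by
  refine le_antisymm (hinv g hg) ?_
  have h2 := conjSG_mono (g := g) (hinv g⁻¹ (inv_mem hg))
  rwa [conjSG_conjSG, mul_inv_cancel, conjSG_one] at h2

lemma self_conjSG {K : Subgroup G} {g : G} (hg : g ∈ K) : conjSG g K ≤ K := by
  intro x hx
  obtain ⟨m, hm, rfl⟩ := mem_conjSG.mp hx
  exact mul_mem (mul_mem hg hm) (inv_mem hg)

lemma eq_of_le_of_card_le [Finite G] {A B : Subgroup G} (h : A ≤ B)
    (hc : Nat.card B ≤ Nat.card A) : A = B := by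
  apply SetLike.ext'
  refine Set.eq_of_subset_of_ncard_le h ?_ (Set.toFinite _)
  rwa [← Nat.card_coe_set_eq, ← Nat.card_coe_set_eq]

lemma le_normalizer_of_conjSG {N M : Subgroup G} (h : ∀ n ∈ N, conjSG n M = M) :
    N ≤ Subgroup.normalizer (M : Set G) := by
  intro n hn
  rw [Subgroup.mem_normalizer_iff]
  intro x
  constructor
  · intro hx
    rw [← h n hn]
    exact mem_conjSG.mpr ⟨x, hx, rfl⟩
  · intro hx
    rw [← h n hn] at hx
    obtain ⟨m, hm, heq⟩ := mem_conjSG.mp hx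
    have : m = x := mul_left_cancel (mul_right_cancel heq)
    exact this ▸ hm

variable [Finite G]

lemma card_sup_dvd {N M : Subgroup G} (h : N ≤ Subgroup.normalizer (M : Set G)) :
    Nat.card ↥(N ⊔ M) ∣ Nat.card N * Nat.card M := by
  set L := Subgroup.normalizer (M : Set G) with hL
  set N' : Subgroup L := N.subgroupOf L with hN'
  set M' : Subgroup L := M.subgroupOf L with hM'
  haveI : M'.Normal := Subgroup.normal_in_normalizer
  have hML : M ≤ L := Subgroup.le_normalizer
  -- card of sup inside L equals card of sup in G
  have hmapsup : (N' ⊔ M').map L.subtype = N ⊔ M := by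
    rw [Subgroup.map_sup, Subgroup.subgroupOf_map_subtype, Subgroup.subgroupOf_map_subtype,
      inf_eq_left.mpr h, inf_eq_left.mpr hML]
  have hcard1 : Nat.card ↥(N ⊔ M) = Nat.card ↥(N' ⊔ M') := by
    rw [← hmapsup]
    exact (Nat.card_congr ((N' ⊔ M').equivMapOfInjective _ L.subtype_injective).toEquiv).symm
  have hcardN : Nat.card N' = Nat.card N := by
    rw [hN', card_subgroupOf, inf_eq_left.mpr h]
  have hcardM : Nat.card M' = Nat.card M := by
    rw [hM', card_subgroupOf, inf_eq_left.mpr hML]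
  -- second isomorphism theorem inside L
  have e := QuotientGroup.quotientInfEquivProdNormalQuotient N' M'
  have h1 : Nat.card ↥(N' ⊔ M') =
      Nat.card (↥(N' ⊔ M') ⧸ M'.subgroupOf (N' ⊔ M')) * Nat.card (M'.subgroupOf (N' ⊔ M')) :=
    Subgroup.card_eq_card_quotient_mul_card_subgroup _
  have h2 : Nat.card (M'.subgroupOf (N' ⊔ M')) = Nat.card M' := by
    rw [card_subgroupOf, inf_eq_left.mpr (le_sup_right : M' ≤ N' ⊔ M')]
  have h3 : Nat.card (↥(N' ⊔ M') ⧸ M'.subgroupOf (N' ⊔ M')) ∣ Nat.card N' := by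
    rw [← Nat.card_congr e.toEquiv]
    exact ⟨Nat.card (M'.subgroupOf N'),
      Subgroup.card_eq_card_quotient_mul_card_subgroup (M'.subgroupOf N')⟩
  rw [hcard1, h1, h2, hcardM]
  exact Nat.mul_dvd_mul (hcardN ▸ h3) dvd_rfl

/-- `N` has p-power order or order coprime to `p`. -/
def PiOr (p : ℕ) (N : Subgroup G) : Prop :=
  (∃ k, Nat.card N = p ^ k) ∨ Nat.Coprime (Nat.card N) p

lemma piOr_conjSG {p : ℕ} {g : G} {N : Subgroup G} (h : PiOr p N) : PiOr p (conjSG g N) := by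
  unfold PiOr at *
  rwa [card_conjSG]

instance : Finite (Subgroup G) :=
  Finite.of_injective (fun H : Subgroup G => (H : Set G)) SetLike.coe_injective

lemma exists_char_core (p : ℕ) (hp : p.Prime) {K N₀ : Subgroup G}
    (h0b : N₀ ≠ ⊥) (h0K : N₀ ≤ K) (h0inv : ∀ g ∈ K, conjSG g N₀ ≤ N₀) (h0pi : PiOr p N₀) :
    ∃ N : Subgroup G, N ≠ ⊥ ∧ N ≤ K ∧ PiOr p N ∧
      ∀ g : G, conjSG g K = K → conjSG g N = N := by
  classical
  set S : Set (Subgroup G) :=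
    {N | N ≠ ⊥ ∧ N ≤ K ∧ (∀ g ∈ K, conjSG g N ≤ N) ∧ PiOr p N} with hS
  obtain ⟨N, hNS, hmax⟩ := Set.Finite.exists_maximalFor (fun N : Subgroup G => Nat.card N) S
    (Set.toFinite S) ⟨N₀, h0b, h0K, h0inv, h0pi⟩
  obtain ⟨hN1, hN2, hN3, hN4⟩ := hNS
  refine ⟨N, hN1, hN2, hN4, ?_⟩
  intro g hgK
  set M := conjSG g N with hM
  have hinvK : conjSG g⁻¹ K = K := by
    have := congrArg (conjSG g⁻¹) hgK
    rw [conjSG_conjSG, inv_mul_cancel, conjSG_one] at this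
    exact this.symm
  -- M is K-invariant
  have hMinv : ∀ h ∈ K, conjSG h M ≤ M := by
    intro h hh
    have hu : g⁻¹ * h * g ∈ K := by
      rw [← hinvK]
      exact mem_conjSG.mpr ⟨h, hh, by group⟩
    have h5 := conjSG_mono (g := g) (hN3 _ hu)
    rw [conjSG_conjSG] at h5
    have : g * (g⁻¹ * h * g) = h * g := by group
    rw [this, ← conjSG_conjSG] at h5
    exact h5
  have hMK : M ≤ K := by
    rw [hM, ← hgK]
    exact conjSG_mono hN2
  have hMcard : Nat.card M = Nat.card N := card_conjSG
  -- the join is in S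
  have hjoin : N ⊔ M ∈ S := by
    refine ⟨fun hbot => hN1 (le_bot_iff.mp (le_trans le_sup_left hbot.le)), sup_le hN2 hMK,
      fun h hh => ?_, ?_⟩
    · rw [conjSG_sup]
      exact sup_le (le_trans (hN3 h hh) le_sup_left) (le_trans (hMinv h hh) le_sup_right)
    · have hnm : N ≤ Subgroup.normalizer (M : Set G) := le_normalizer_of_conjSG (fun n hn =>
        conjSG_eq_of_forall hMinv (hN2 hn))
      have hdvd := card_sup_dvd hnm
      rw [hMcard] at hdvd
      rcases hN4 with ⟨k, hk⟩ | hcop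
      · left
        rw [hk, ← pow_add] at hdvd
        obtain ⟨j, _, hj⟩ := (Nat.dvd_prime_pow hp).mp hdvd
        exact ⟨j, hj⟩
      · right
        exact Nat.Coprime.coprime_dvd_left hdvd (hcop.mul hcop)
  have hcardeq : Nat.card N = Nat.card ↥(N ⊔ M) :=
    le_antisymm (Subgroup.card_le_of_le le_sup_left) (hmax hjoin (Subgroup.card_le_of_le le_sup_left))
  have hsup_eq : N ⊔ M = N :=
    (eq_of_le_of_card_le le_sup_left hcardeq.ge).symm
  have hMN : M ≤ N := le_sup_right.trans hsup_eq.le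
  exact eq_of_le_of_card_le hMN (hMcard.ge)

end Core

section Series

variable [Finite G]

/-- A nontrivial finite p-solvable group has a nontrivial normal subgroup which is
a p-group or a p'-group. -/
lemma exists_normal_piOr {p : ℕ} (hp : p.Prime) (h : IsPSolvable p G)
    (hnt : Nontrivial G) : ∃ N : Subgroup G, N.Normal ∧ N ≠ ⊥ ∧ PiOr p N := by
  obtain ⟨n, H, h0, hl, hstep⟩ := h
  have main : ∀ i : Fin (n + 1), H i ≠ ⊥ →
      ∃ N, N ≠ ⊥ ∧ N ≤ H i ∧ (∀ g ∈ H i, conjSG g N ≤ N) ∧ PiOr p N := by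
    intro i
    induction i using Fin.induction with
    | zero => intro hne; exact absurd h0 hne
    | succ i ih =>
      intro hne
      obtain ⟨hle, hnorm, hrel⟩ := hstep i
      by_cases hb : H i.castSucc = ⊥
      · refine ⟨H i.succ, hne, le_rfl, fun g hg => self_conjSG hg, ?_⟩
        rw [hb, Subgroup.relIndex_bot_left] at hrel
        exact hrel
      · obtain ⟨N₀, h1, h2, h3, h4⟩ := ih hb
        obtain ⟨N, hN1, hN2, hN4, hchar⟩ := exists_char_core p hp h1 h2 h3 h4
        refine ⟨N, hN1, hN2.trans hle, ?_, hN4⟩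
        intro g hg
        have hKinv : conjSG g (H i.castSucc) = H i.castSucc := by
          refine conjSG_eq_of_forall (K := H i.succ) ?_ hg
          intro b hbmem x hx
          obtain ⟨m, hm, rfl⟩ := mem_conjSG.mp hx
          exact (subgroupOf_normal_iff hle).mp hnorm b hbmem m hm
        exact (hchar g hKinv).le
  obtain ⟨N, h1, _, h3, h4⟩ := main (Fin.last n) (by rw [hl]; exact top_ne_bot)
  rw [hl] at h3
  refine ⟨N, ?_, h1, h4⟩
  constructor
  intro x hx g
  have := h3 g trivial
  exact this (mem_conjSG.mpr ⟨x, hx, rfl⟩)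

end Series

/-- Every nontrivial finite p-group contains a non-Schur element. -/
lemma pgroup_nonSchur (p : ℕ) (hp : p.Prime) :
    ∀ (c : ℕ) (P : Type*) [Group P] [Finite P], Nat.card P ≤ c → IsPGroup p P →
      Nontrivial P →
      ∃ x : P, x ∉ ⁅Subgroup.centralizer {x}, Subgroup.centralizer {x}⁆ := by
  intro c
  induction c with
  | zero =>
    intro P _ _ hc _ _
    exact absurd (Nat.card_pos.trans_le hc) (lt_irrefl 0)
  | succ c ih =>
    intro P _ _ hc hP hnt
    by_cases hZ : Subgroup.center P = ⊤
    · obtain ⟨x, hx⟩ := exists_ne (1 : P)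
      refine ⟨x, fun hmem => hx ?_⟩
      have hle : ⁅Subgroup.centralizer {x}, Subgroup.centralizer {x}⁆ ≤ ⊥ := by
        rw [Subgroup.commutator_le]
        intro g₁ _ g₂ _
        rw [Subgroup.mem_bot, commutatorElement_eq_one_iff_commute, commute_iff_eq]
        have hg₂ : g₂ ∈ Subgroup.center P := hZ ▸ Subgroup.mem_top g₂
        exact Subgroup.mem_center_iff.mp hg₂ g₁
      exact (Subgroup.mem_bot).mp (hle hmem)
    · haveI := hnt
      haveI : Fact p.Prime := ⟨hp⟩
      haveI hZnt : Nontrivial (Subgroup.center P) := hP.center_nontrivial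
      set Q := P ⧸ Subgroup.center P with hQ
      have hsurj := QuotientGroup.mk'_surjective (Subgroup.center P)
      have hQnt : Nontrivial Q := by
        obtain ⟨g, hg⟩ : ∃ g, g ∉ Subgroup.center P := by
          by_contra hcon
          push_neg at hcon
          exact hZ ((Subgroup.eq_top_iff' (Subgroup.center P)).mpr hcon)
        exact ⟨⟨(g : Q), 1, by rwa [Ne, QuotientGroup.eq_one_iff]⟩⟩
      have hcard : Nat.card Q < Nat.card P := by
        rw [Subgroup.card_eq_card_quotient_mul_card_subgroup (Subgroup.center P)]
        have h2 : 1 < Nat.card (Subgroup.center P) := Finite.one_lt_card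
        exact Nat.lt_mul_iff_one_lt_right Nat.card_pos |>.mpr h2
      obtain ⟨x', hx'⟩ := ih Q (Nat.lt_succ_iff.mp (hcard.trans_le hc))
        (hP.to_quotient _) hQnt
      obtain ⟨x, rfl⟩ := hsurj x'
      exact ⟨x, nonSchur_lift (QuotientGroup.mk' (Subgroup.center P)) x hx'⟩

section Transfer

variable [Finite G]

/-- Coprime-index transfer: if `N` is a normal subgroup of index coprime to the order of
`x ∈ N`, and `x` is central in its centralizer (always true), then membership of `x` in the
commutator of its `G`-centralizer forces membership in the commutator of its `N`-centralizer. -/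
lemma transfer_case {p : ℕ} (hp : p.Prime) {N : Subgroup G} (hN : N.Normal)
    (hind : ¬ p ∣ N.index) (x₀ : ↥N) (hord : ∃ k, orderOf x₀ = p ^ k)
    (hx₀ : x₀ ∉ ⁅Subgroup.centralizer {x₀}, Subgroup.centralizer {x₀}⁆) :
    (↑x₀ : G) ∉ ⁅Subgroup.centralizer {(x₀ : G)}, Subgroup.centralizer {(x₀ : G)}⁆ := by
  intro hmem
  set x : G := ↑x₀ with hxdef
  set C : Subgroup G := Subgroup.centralizer {x} with hC
  have hxC : x ∈ C := Subgroup.mem_centralizer_iff.mpr (by rintro h rfl; rfl)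
  set Q : Subgroup ↥C := N.subgroupOf C with hQ
  haveI : Q.FiniteIndex := ⟨Subgroup.index_ne_zero_of_finite⟩
  set xc : ↥C := ⟨x, hxC⟩ with hxc
  have hxcQ : xc ∈ Q := by rw [hQ, Subgroup.mem_subgroupOf]; exact x₀.2
  have hcentral : ∀ c : ↥C, c * xc = xc * c := by
    rintro ⟨c, hc⟩
    have := Subgroup.mem_centralizer_iff.mp hc x rfl
    exact Subtype.ext this.symm
  -- transfer to the abelianization of Q
  set ϕ : ↥Q →* Abelianization ↥Q := Abelianization.of with hϕ
  have key : ∀ (k : ℕ) (g₀ : ↥C), g₀⁻¹ * xc ^ k * g₀ ∈ Q → g₀⁻¹ * xc ^ k * g₀ = xc ^ k := by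
    intro k g₀ _
    have hc0 : Commute g₀ xc := hcentral g₀
    have hcomm : Commute g₀ (xc ^ k) := hc0.pow_right k
    rw [mul_assoc, ← hcomm.eq, ← mul_assoc, inv_mul_cancel, one_mul]
  have htr := MonoidHom.transfer_eq_pow ϕ xc key
  -- xc lies in the commutator subgroup of C
  have hCeq : (⁅C, C⁆ : Subgroup G) = (commutator ↥C).map C.subtype := by
    rw [_root_.commutator_def, Subgroup.map_commutator, ← MonoidHom.range_eq_map,
      Subgroup.range_subtype]
  have hxcComm : xc ∈ commutator ↥C := by
    rw [hCeq] at hmem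
    obtain ⟨y, hy, hyx⟩ := hmem
    rwa [show y = xc from Subtype.ext hyx] at hy
  have h0 : (MonoidHom.transfer ϕ) xc = 1 :=
    Abelianization.commutator_subset_ker (MonoidHom.transfer ϕ) hxcComm
  rw [htr] at h0
  have h2 : (⟨xc ^ Q.index, MonoidHom.transfer_eq_pow_aux xc key⟩ : ↥Q) ∈ commutator ↥Q :=
    (QuotientGroup.eq_one_iff _).mp h0
  -- push down to G : x ^ Q.index lies in the commutator of N ⊓ C
  set n : ℕ := Q.index with hn
  have h3 : x ^ n ∈ ⁅N ⊓ C, N ⊓ C⁆ := by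
    have m2 : xc ^ n ∈ (commutator ↥Q).map Q.subtype := ⟨_, h2, rfl⟩
    have m3 : x ^ n ∈ ((commutator ↥Q).map Q.subtype).map C.subtype :=
      ⟨_, m2, by simp [hxc]⟩
    rw [_root_.commutator_def, Subgroup.map_commutator, Subgroup.map_commutator,
      ← MonoidHom.range_eq_map, Subgroup.range_subtype, hQ,
      Subgroup.subgroupOf_map_subtype] at m3
    exact m3
  -- remove the exponent using coprimality
  obtain ⟨k, hk⟩ := hord
  have hordx : orderOf x = p ^ k := by rw [hxdef, orderOf_coe, hk]
  have hcop : Nat.Coprime n (orderOf x) := by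
    have hdvd : n ∣ N.index := Subgroup.relIndex_dvd_index_of_normal N C
    have hnp : ¬ p ∣ n := fun hc => hind (hc.trans hdvd)
    rw [hordx]
    exact Nat.Coprime.pow_right k (((Nat.Prime.coprime_iff_not_dvd hp).mpr hnp).symm)
  obtain ⟨t, ht⟩ : ∃ t, n * t ≡ 1 [MOD orderOf x] := by
    rcases Nat.lt_or_ge 1 (orderOf x) with h1 | h1
    · obtain ⟨m, -, hm⟩ := Nat.exists_mul_mod_eq_one_of_coprime hcop h1
      exact ⟨m, by unfold Nat.ModEq; rw [hm, Nat.mod_eq_of_lt h1]⟩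
    · have : orderOf x = 1 := le_antisymm h1 (orderOf_pos x)
      exact ⟨1, by rw [this]; exact Nat.modEq_one⟩
  have h4 : x ∈ ⁅N ⊓ C, N ⊓ C⁆ := by
    have hx1 : x = (x ^ n) ^ t := by
      rw [← pow_mul]
      calc x = x ^ 1 := (pow_one x).symm
        _ = x ^ (n * t) := (pow_eq_pow_iff_modEq.mpr ht).symm
    rw [hx1]
    exact pow_mem h3 t
  -- contradiction with the choice of x₀
  have h5 : N ⊓ C = (Subgroup.centralizer {x₀} : Subgroup ↥N).map N.subtype := by
    ext y
    simp only [Subgroup.mem_inf, Subgroup.mem_map]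
    constructor
    · rintro ⟨hyN, hyC⟩
      refine ⟨⟨y, hyN⟩, ?_, rfl⟩
      rw [Subgroup.mem_centralizer_iff]
      rintro h rfl
      exact Subtype.ext (Subgroup.mem_centralizer_iff.mp hyC x rfl)
    · rintro ⟨⟨y, hyN⟩, hyc, rfl⟩
      refine ⟨hyN, Subgroup.mem_centralizer_iff.mpr ?_⟩
      rintro h rfl
      have := Subgroup.mem_centralizer_iff.mp hyc x₀ rfl
      exact congrArg Subtype.val this
  rw [h5, ← Subgroup.map_commutator] at h4
  obtain ⟨z, hz, hzx⟩ := h4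
  exact hx₀ (by rwa [show z = x₀ from Subtype.ext hzx] at hz)

end Transfer


/-- Main induction. -/
lemma main_aux (p : ℕ) (hp : p.Prime) :
    ∀ (c : ℕ) (G : Type*) [Group G] [Finite G], Nat.card G ≤ c → IsPSolvable p G →
      p ∣ Nat.card G → ∃ x : G, IsPElement p x ∧ IsNonSchur x := by
  intro c
  induction c with
  | zero =>
    intro G _ _ hc _ _
    exact absurd (Nat.card_pos.trans_le hc) (lt_irrefl 0)
  | succ c ih =>
    intro G _ _ hc hsolv hdvd
    haveI hnt : Nontrivial G := by
      rw [← Finite.one_lt_card_iff_nontrivial]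
      exact lt_of_lt_of_le hp.one_lt (Nat.le_of_dvd Nat.card_pos hdvd)
    obtain ⟨N, hNnormal, hNbot, hNpi⟩ := exists_normal_piOr hp hsolv hnt
    haveI := hNnormal
    haveI : Nontrivial ↥N := N.nontrivial_iff_ne_bot.mpr hNbot
    have hcardGN : Nat.card G = Nat.card (G ⧸ N) * Nat.card N :=
      Subgroup.card_eq_card_quotient_mul_card_subgroup N
    by_cases hq : p ∣ Nat.card (G ⧸ N)
    · have hlt : Nat.card (G ⧸ N) < Nat.card G := by
        rw [hcardGN]
        exact Nat.lt_mul_iff_one_lt_right Nat.card_pos |>.mpr Finite.one_lt_card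
      obtain ⟨x', hx'P, hx'S⟩ := ih (G ⧸ N) (Nat.lt_succ_iff.mp (hlt.trans_le hc))
        (isPSolvable_quotient hp hsolv N) hq
      obtain ⟨x, hfx, hxP⟩ :=
        exists_pElement_lift (QuotientGroup.mk'_surjective N) hp x' hx'P
      refine ⟨x, hxP, ?_⟩
      apply nonSchur_lift (QuotientGroup.mk' N)
      rw [hfx]
      exact hx'S
    · -- N is a normal Sylow p-subgroup
      have hpN : p ∣ Nat.card N := by
        rcases (Nat.Prime.dvd_mul hp).mp (hcardGN ▸ hdvd) with h | h
        · exact absurd h hq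
        · exact h
      have hNcard : ∃ k, Nat.card N = p ^ k := by
        rcases hNpi with h | h
        · exact h
        · exfalso
          have h1 : p ∣ Nat.gcd (Nat.card N) p := Nat.dvd_gcd hpN dvd_rfl
          rw [Nat.Coprime] at h
          rw [h] at h1
          exact Nat.Prime.one_lt hp |>.ne' (Nat.eq_one_of_dvd_one h1)
      haveI : Fact p.Prime := ⟨hp⟩
      have hPG : IsPGroup p ↥N := IsPGroup.iff_card.mpr hNcard
      obtain ⟨x₀, hx₀⟩ := pgroup_nonSchur p hp (Nat.card ↥N) ↥N le_rfl hPG inferInstance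
      have hindex : ¬ p ∣ N.index := by
        rwa [Subgroup.index_eq_card]
      have hordx₀ : ∃ k, orderOf x₀ = p ^ k := by
        obtain ⟨k, hk⟩ := hPG x₀
        obtain ⟨j, _, hj⟩ := (Nat.dvd_prime_pow hp).mp (orderOf_dvd_of_pow_eq_one hk)
        exact ⟨j, hj⟩
      refine ⟨↑x₀, ?_, ?_⟩
      · obtain ⟨k, hk⟩ := hordx₀
        exact ⟨k, by rw [orderOf_coe, hk]⟩
      · exact transfer_case hp hNnormal hindex x₀ hordx₀ hx₀

end NonSchurAux

theorem nonSchur_of_pSolvable (p : ℕ) (hp : p.Prime) (G : Type*) [Group G] [Finite G]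
    (hG : IsPSolvable p G) (hdvd : p ∣ Nat.card G) :
    ∃ x : G, IsPElement p x ∧ IsNonSchur x :=
  NonSchurAux.main_aux p hp (Nat.card G) G le_rfl hG hdvd
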